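/- Quantum Efron–Stein inequality: let n ≥ 1, let d : Fin n → ℕ with d i ≥ 1, let ρ_i be a d_i-dimensional quantum state for each i, and let ϱ be the product state on K = Π i, Fin (d i) with entries ϱ(a,b) = ∏_i ρ_i(a i, b i). Then for every Hermitian matrix X indexed by K, Var_ϱ[X] ≤ ∑_{i=1}^n Re(Tr[ϱ · (D_i X)²]). -/

import Mathlib

open scoped BigOperators ComplexOrder

noncomputable section

/-- A `d`-dimensional quantum state: positive semidefinite with trace 1. -/
def IsState {d : ℕ} (ρ : Matrix (Fin d) (Fin d) ℂ) : Prop :=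
  ρ.PosSemidef ∧ ρ.trace = 1

/-- The product state `ρ₁ ⊗ ⋯ ⊗ ρ_n` on `K = Π i, Fin (dim i)`. -/
def prodState {n : ℕ} {dim : Fin n → ℕ}
    (ρ : ∀ i, Matrix (Fin (dim i)) (Fin (dim i)) ℂ) :
    Matrix (∀ j, Fin (dim j)) (∀ j, Fin (dim j)) ℂ :=
  fun a b => ∏ i, ρ i (a i) (b i)

/-- Marginalization of the `i`-th component: `E_i X = Tr_i[ρ_i X] ⊗ Id_i`. -/
def Emap {n : ℕ} {dim : Fin n → ℕ}
    (ρ : ∀ i, Matrix (Fin (dim i)) (Fin (dim i)) ℂ) (i : Fin n)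
    (X : Matrix (∀ j, Fin (dim j)) (∀ j, Fin (dim j)) ℂ) :
    Matrix (∀ j, Fin (dim j)) (∀ j, Fin (dim j)) ℂ :=
  fun a b =>
    if a i = b i then
      ∑ e, ∑ c, ρ i e c * X (Function.update a i c) (Function.update b i e)
    else 0

/-- `D_i X = X - E_i X`. -/
def Dmap {n : ℕ} {dim : Fin n → ℕ}
    (ρ : ∀ i, Matrix (Fin (dim i)) (Fin (dim i)) ℂ) (i : Fin n)
    (X : Matrix (∀ j, Fin (dim j)) (∀ j, Fin (dim j)) ℂ) :
    Matrix (∀ j, Fin (dim j)) (∀ j, Fin (dim j)) ℂ :=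
  X - Emap ρ i X

/-- Variance of the observable `X` in the state `ϱ`. -/
def qVar {K : Type*} [Fintype K] (ϱ X : Matrix K K ℂ) : ℝ :=
  ((ϱ * (X * X)).trace).re - (((ϱ * X).trace).re) ^ 2

/-! ### Auxiliary machinery for the proof -/

namespace QESAux

open Matrix Finset

set_option linter.unusedSectionVars false
set_option maxHeartbeats 2000000

section Abstract

variable {α β : Type*} [Fintype α] [Fintype β] [DecidableEq α] [DecidableEq β]

/-- Tensor product of two square matrices, entrywise. -/
def kron2 (ρα : Matrix α α ℂ) (σ : Matrix β β ℂ) : Matrix (α × β) (α × β) ℂ :=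
  fun p q => ρα p.1 q.1 * σ p.2 q.2

/-- The conditional expectation on the first factor. -/
def E2 (ρα : Matrix α α ℂ) (X : Matrix (α × β) (α × β) ℂ) : Matrix (α × β) (α × β) ℂ :=
  fun p q => if p.1 = q.1 then ∑ e, ∑ c, ρα e c * X (c, p.2) (e, q.2) else 0

lemma trace2 (M N : Matrix (α × β) (α × β) ℂ) :
    (M * N).trace = ∑ p, ∑ q, M p q * N q p := by
  simp [Matrix.trace, Matrix.mul_apply, Matrix.diag]

lemma trace3 (M N P : Matrix (α × β) (α × β) ℂ) :
    (M * N * P).trace = ∑ p, ∑ q, ∑ r, M p q * N q r * P r p := by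
  simp only [Matrix.trace, Matrix.mul_apply, Matrix.diag, Finset.sum_mul]
  refine Finset.sum_congr rfl fun p _ => Finset.sum_comm

lemma AL1 (ρα : Matrix α α ℂ) (σ : Matrix β β ℂ) (htr : ρα.trace = 1)
    (B : Matrix (α × β) (α × β) ℂ) :
    (kron2 ρα σ * E2 ρα B).trace = (kron2 ρα σ * B).trace := by
  simp only [trace2, kron2, E2, Fintype.sum_prod_type]
  simp only [mul_ite, mul_zero, Finset.sum_ite_irrel, Finset.sum_const_zero,
    Finset.sum_ite_eq', Finset.mem_univ, if_true]
  calc (∑ x : α, ∑ x_1 : β, ∑ x_2 : β, ρα x x * σ x_1 x_2 *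
        ∑ e : α, ∑ c : α, ρα e c * B (c, x_2) (e, x_1))
      = (∑ x : α, ρα x x) * ∑ x_1 : β, ∑ x_2 : β, σ x_1 x_2 *
        ∑ e : α, ∑ c : α, ρα e c * B (c, x_2) (e, x_1) := by
        rw [Finset.sum_mul]
        refine Finset.sum_congr rfl fun x _ => ?_
        simp only [Finset.mul_sum]
        refine Finset.sum_congr rfl fun _ _ => Finset.sum_congr rfl fun _ _ =>
          Finset.sum_congr rfl fun _ _ => Finset.sum_congr rfl fun _ _ => by ring
    _ = ∑ x_1 : β, ∑ x_2 : β, σ x_1 x_2 *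
        ∑ e : α, ∑ c : α, ρα e c * B (c, x_2) (e, x_1) := by
        rw [show (∑ x : α, ρα x x) = ρα.trace from rfl, htr, one_mul]
    _ = ∑ x : α, ∑ x_1 : β, ∑ x_2 : α, ∑ x_3 : β, ρα x x_2 * σ x_1 x_3 * B (x_2, x_3) (x, x_1) := by
        simp only [Finset.mul_sum]
        conv_rhs => rw [Finset.sum_comm]
        refine Finset.sum_congr rfl fun b1 _ => ?_
        conv_rhs => enter [2, e]; rw [Finset.sum_comm]
        conv_rhs => rw [Finset.sum_comm]
        refine Finset.sum_congr rfl fun _ _ => Finset.sum_congr rfl fun _ _ =>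
          Finset.sum_congr rfl fun _ _ => by ring

lemma AL2 (ρα : Matrix α α ℂ) (σ : Matrix β β ℂ) (htr : ρα.trace = 1)
    (A B : Matrix (α × β) (α × β) ℂ) :
    (kron2 ρα σ * A * E2 ρα B).trace = (kron2 ρα σ * E2 ρα A * E2 ρα B).trace := by
  simp only [trace3, kron2, E2, Fintype.sum_prod_type]
  simp only [mul_ite, mul_zero, ite_mul, zero_mul, Finset.sum_ite_irrel, Finset.sum_const_zero,
    Finset.sum_ite_eq', Finset.sum_ite_eq, Finset.mem_univ, if_true]
  have key : ∀ p2 q2 r2 : β,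
      (∑ p1 : α, ∑ q1 : α, ρα p1 q1 * σ p2 q2 * A (q1, q2) (p1, r2) *
        ∑ e : α, ∑ c : α, ρα e c * B (c, r2) (e, p2))
      = σ p2 q2 * ((∑ e : α, ∑ c : α, ρα e c * A (c, q2) (e, r2)) *
        ∑ e : α, ∑ c : α, ρα e c * B (c, r2) (e, p2)) := by
    intro p2 q2 r2
    simp only [Finset.sum_mul, Finset.mul_sum]
    conv_rhs => enter [2, a]; rw [Finset.sum_comm]
    conv_rhs => rw [Finset.sum_comm]
    conv_rhs => enter [2, a, 2, b]; rw [Finset.sum_comm]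
    conv_rhs => enter [2, a]; rw [Finset.sum_comm]
    refine Finset.sum_congr rfl fun _ _ => Finset.sum_congr rfl fun _ _ =>
      Finset.sum_congr rfl fun _ _ => Finset.sum_congr rfl fun _ _ => by ring
  have lhs_eq : (∑ p1 : α, ∑ p2 : β, ∑ q1 : α, ∑ q2 : β, ∑ r2 : β,
        ρα p1 q1 * σ p2 q2 * A (q1, q2) (p1, r2) *
          ∑ e : α, ∑ c : α, ρα e c * B (c, r2) (e, p2))
      = ∑ p2 : β, ∑ q2 : β, ∑ r2 : β, σ p2 q2 *
        ((∑ e : α, ∑ c : α, ρα e c * A (c, q2) (e, r2)) *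
          ∑ e : α, ∑ c : α, ρα e c * B (c, r2) (e, p2)) := by
    conv_lhs => rw [Finset.sum_comm]
    conv_lhs => enter [2, a]; rw [Finset.sum_comm]
    conv_lhs => enter [2, a, 2, b]; rw [Finset.sum_comm]
    conv_lhs => enter [2, a, 2, b, 2, c]; rw [Finset.sum_comm]
    conv_lhs => enter [2, a]; rw [Finset.sum_comm]
    conv_lhs => enter [2, a, 2, b]; rw [Finset.sum_comm]
    conv_lhs => enter [2, a, 2, b, 2, c]; rw [Finset.sum_comm]
    exact Finset.sum_congr rfl fun p2 _ => Finset.sum_congr rfl fun q2 _ =>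
      Finset.sum_congr rfl fun r2 _ => key p2 q2 r2
  rw [lhs_eq]
  have rhs_eq : (∑ t : α, ∑ p2 : β, ∑ q2 : β, ∑ r2 : β,
        (ρα t t * σ p2 q2 * ∑ e : α, ∑ c : α, ρα e c * A (c, q2) (e, r2)) *
          ∑ e : α, ∑ c : α, ρα e c * B (c, r2) (e, p2))
      = (∑ t : α, ρα t t) * ∑ p2 : β, ∑ q2 : β, ∑ r2 : β, σ p2 q2 *
        ((∑ e : α, ∑ c : α, ρα e c * A (c, q2) (e, r2)) *
          ∑ e : α, ∑ c : α, ρα e c * B (c, r2) (e, p2)) := by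
    rw [Finset.sum_mul]
    refine Finset.sum_congr rfl fun t _ => ?_
    rw [Finset.mul_sum]
    refine Finset.sum_congr rfl fun p2 _ => ?_
    rw [Finset.mul_sum]
    refine Finset.sum_congr rfl fun q2 _ => ?_
    rw [Finset.mul_sum]
    refine Finset.sum_congr rfl fun r2 _ => by ring
  rw [rhs_eq, show (∑ t : α, ρα t t) = ρα.trace from rfl, htr, one_mul]

end Abstract

section PiLevel

variable {n : ℕ} {dim : Fin n → ℕ} (ρ : ∀ i, Matrix (Fin (dim i)) (Fin (dim i)) ℂ)

lemma Emap_sub (i : Fin n) (X Y : Matrix (∀ j, Fin (dim j)) (∀ j, Fin (dim j)) ℂ) :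
    Emap ρ i (X - Y) = Emap ρ i X - Emap ρ i Y := by
  ext a b
  simp only [Emap, Matrix.sub_apply]
  by_cases h : a i = b i
  · simp only [if_pos h, mul_sub, Finset.sum_sub_distrib]
  · simp [h]

lemma Emap_idem (i : Fin n) (htr : (ρ i).trace = 1)
    (X : Matrix (∀ j, Fin (dim j)) (∀ j, Fin (dim j)) ℂ) :
    Emap ρ i (Emap ρ i X) = Emap ρ i X := by
  ext a b
  simp only [Emap, Function.update_idem, Function.update_self]
  by_cases h : a i = b i
  · simp only [if_pos h, mul_ite, mul_zero, Finset.sum_ite_eq, Finset.sum_ite_eq',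
      Finset.mem_univ, if_true]
    rw [← Finset.sum_mul]
    rw [show (∑ e, ρ i e e) = (ρ i).trace from rfl, htr, one_mul]
  · simp [h]

lemma Emap_conjT (i : Fin n) (hH : (ρ i).IsHermitian)
    (X : Matrix (∀ j, Fin (dim j)) (∀ j, Fin (dim j)) ℂ) :
    (Emap ρ i X)ᴴ = Emap ρ i Xᴴ := by
  ext a b
  simp only [Matrix.conjTranspose_apply, Emap]
  by_cases h : a i = b i
  · rw [if_pos h.symm, if_pos h]
    rw [star_sum]
    rw [Finset.sum_comm]
    refine Finset.sum_congr rfl fun e _ => ?_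
    rw [star_sum]
    refine Finset.sum_congr rfl fun c _ => ?_
    rw [star_mul']
    congr 1
    exact hH.apply c e
  · rw [if_neg (fun hh => h hh.symm), if_neg h, star_zero]

lemma Emap_comm {i j : Fin n} (hij : i ≠ j)
    (X : Matrix (∀ j, Fin (dim j)) (∀ j, Fin (dim j)) ℂ) :
    Emap ρ i (Emap ρ j X) = Emap ρ j (Emap ρ i X) := by
  ext a b
  simp only [Emap, Function.update_of_ne hij, Function.update_of_ne hij.symm]
  by_cases h1 : a i = b i <;> by_cases h2 : a j = b j
  · simp only [if_pos h1, if_pos h2, mul_ite, mul_zero, Finset.sum_ite_irrel,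
      Finset.sum_const_zero]
    simp only [Finset.mul_sum]
    conv_rhs => enter [2, a]; rw [Finset.sum_comm]
    conv_rhs => rw [Finset.sum_comm]
    conv_rhs => enter [2, a, 2, b]; rw [Finset.sum_comm]
    conv_rhs => enter [2, a]; rw [Finset.sum_comm]
    refine Finset.sum_congr rfl fun x _ => Finset.sum_congr rfl fun x1 _ =>
      Finset.sum_congr rfl fun e _ => Finset.sum_congr rfl fun c _ => ?_
    rw [Function.update_comm hij.symm, Function.update_comm hij.symm]
    ring
  · simp [h1, h2]
  · simp [h1, h2]
  · simp [h1, h2]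

lemma prod_trace (hρ : ∀ i, IsState (ρ i)) : (prodState ρ).trace = 1 := by
  have h0 : (prodState ρ).trace = ∑ a : ∀ j, Fin (dim j), ∏ i, ρ i (a i) (a i) := rfl
  rw [h0, (Fintype.prod_sum (f := fun (i : Fin n) (t : Fin (dim i)) => ρ i t t)).symm]
  rw [Finset.prod_congr rfl fun (i : Fin n) _ =>
    (show (∑ j : Fin (dim i), ρ i j j) = 1 from (hρ i).2)]
  simp

lemma prod_fact (hρ : ∀ i, IsState (ρ i)) :
    ∃ C : Matrix (∀ j, Fin (dim j)) (∀ j, Fin (dim j)) ℂ, prodState ρ = Cᴴ * C := by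
  have hfac : ∀ i, ∃ B : Matrix (Fin (dim i)) (Fin (dim i)) ℂ, ρ i = Bᴴ * B := by
    intro i
    classical
    open scoped MatrixOrder Matrix.Norms.L2Operator in
    obtain ⟨B, hB⟩ := CStarAlgebra.nonneg_iff_eq_star_mul_self.mp (hρ i).1.nonneg
    exact ⟨B, hB⟩
  choose B hB using hfac
  refine ⟨fun a b => ∏ i, B i (a i) (b i), ?_⟩
  ext a b
  simp only [prodState, Matrix.mul_apply, Matrix.conjTranspose_apply]
  calc (∏ i, ρ i (a i) (b i))
      = ∏ i, ∑ t, star (B i t (a i)) * B i t (b i) := by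
        refine Finset.prod_congr rfl fun i _ => ?_
        rw [hB i, Matrix.mul_apply]
        simp [Matrix.conjTranspose_apply]
    _ = ∑ k : ∀ j, Fin (dim j), ∏ i, star (B i (k i) (a i)) * B i (k i) (b i) :=
        Fintype.prod_sum (f := fun (i : Fin n) (t : Fin (dim i)) =>
          star (B i t (a i)) * B i t (b i))
    _ = ∑ k : ∀ j, Fin (dim j), star (∏ i, B i (k i) (a i)) * ∏ i, B i (k i) (b i) := by
        refine Finset.sum_congr rfl fun k _ => ?_
        rw [Finset.prod_mul_distrib]
        congr 1
        rw [star_prod]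

/-- Splitting equivalence at coordinate `i`. -/
abbrev spl (dim : Fin n → ℕ) (i : Fin n) :
    Fin (dim i) × (∀ j : {j : Fin n // j ≠ i}, Fin (dim j)) ≃ ∀ j, Fin (dim j) :=
  (Equiv.piSplitAt i (fun j : Fin n => Fin (dim j))).symm

lemma spl_apply_i (i : Fin n) (t : Fin (dim i)) (a' : ∀ j : {j : Fin n // j ≠ i}, Fin (dim j)) :
    spl dim i (t, a') i = t := by
  simp [spl, Equiv.piSplitAt]

lemma spl_apply_ne (i : Fin n) (t : Fin (dim i)) (a' : ∀ j : {j : Fin n // j ≠ i}, Fin (dim j))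
    (j : {j : Fin n // j ≠ i}) : spl dim i (t, a') (j : Fin n) = a' j := by
  simp [spl, Equiv.piSplitAt, dif_neg j.2]

lemma spl_update (i : Fin n) (t s : Fin (dim i))
    (a' : ∀ j : {j : Fin n // j ≠ i}, Fin (dim j)) :
    Function.update (spl dim i (t, a')) i s = spl dim i (s, a') := by
  funext j
  rcases eq_or_ne j i with rfl | hj
  · simp [spl, Equiv.piSplitAt]
  · simp [spl, Equiv.piSplitAt, Function.update, hj]

lemma split_prodState (i : Fin n) :
    (prodState ρ).submatrix (spl dim i) (spl dim i)
      = kron2 (ρ i) (fun a' b' => ∏ j : {j : Fin n // j ≠ i}, ρ j (a' j) (b' j)) := by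
  ext ⟨t, a'⟩ ⟨s, b'⟩
  simp only [Matrix.submatrix_apply, prodState, kron2]
  rw [← Finset.mul_prod_erase Finset.univ _ (Finset.mem_univ i)]
  rw [spl_apply_i, spl_apply_i]
  congr 1
  rw [Finset.prod_subtype (Finset.univ.erase i)
    (p := fun j : Fin n => j ≠ i) (fun j => by simp [Finset.mem_erase])
    (fun j : Fin n => ρ j (spl dim i (t, a') j) (spl dim i (s, b') j))]
  refine Finset.prod_congr rfl fun j _ => ?_
  rw [spl_apply_ne i t a' j, spl_apply_ne i s b' j]

lemma split_Emap (i : Fin n) (X : Matrix (∀ j, Fin (dim j)) (∀ j, Fin (dim j)) ℂ) :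
    (Emap ρ i X).submatrix (spl dim i) (spl dim i)
      = E2 (ρ i) (X.submatrix (spl dim i) (spl dim i)) := by
  ext ⟨t, a'⟩ ⟨s, b'⟩
  simp only [Matrix.submatrix_apply, Emap, E2, spl_apply_i, spl_update]

lemma trace_spl (i : Fin n) (M : Matrix (∀ j, Fin (dim j)) (∀ j, Fin (dim j)) ℂ) :
    (M.submatrix (spl dim i) (spl dim i)).trace = M.trace := by
  simp only [Matrix.trace, Matrix.diag, Matrix.submatrix_apply]
  exact Fintype.sum_equiv (spl dim i) _ _ fun _ => rfl

lemma tr1 (i : Fin n) (htr : (ρ i).trace = 1)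
    (B : Matrix (∀ j, Fin (dim j)) (∀ j, Fin (dim j)) ℂ) :
    (prodState ρ * Emap ρ i B).trace = (prodState ρ * B).trace := by
  rw [← trace_spl i (prodState ρ * Emap ρ i B), ← trace_spl i (prodState ρ * B)]
  rw [← Matrix.submatrix_mul_equiv (prodState ρ) (Emap ρ i B) _ (spl dim i) _,
      ← Matrix.submatrix_mul_equiv (prodState ρ) B _ (spl dim i) _]
  rw [split_prodState, split_Emap]
  exact AL1 _ _ htr _

lemma tr2 (i : Fin n) (htr : (ρ i).trace = 1)
    (A B : Matrix (∀ j, Fin (dim j)) (∀ j, Fin (dim j)) ℂ) :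
    (prodState ρ * A * Emap ρ i B).trace
      = (prodState ρ * Emap ρ i A * Emap ρ i B).trace := by
  rw [← trace_spl i (prodState ρ * A * Emap ρ i B),
      ← trace_spl i (prodState ρ * Emap ρ i A * Emap ρ i B)]
  rw [← Matrix.submatrix_mul_equiv (prodState ρ * A) (Emap ρ i B) _ (spl dim i) _,
      ← Matrix.submatrix_mul_equiv (prodState ρ) A _ (spl dim i) _,
      ← Matrix.submatrix_mul_equiv (prodState ρ * Emap ρ i A) (Emap ρ i B) _ (spl dim i) _,
      ← Matrix.submatrix_mul_equiv (prodState ρ) (Emap ρ i A) _ (spl dim i) _]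
  rw [split_prodState, split_Emap, split_Emap]
  exact AL2 _ _ htr _ _

end PiLevel

end QESAux
namespace QESAux
open Matrix Finset
set_option linter.unusedSectionVars false
set_option maxHeartbeats 2000000

section Phi

variable {n : ℕ} {dim : Fin n → ℕ} (ρ : ∀ i, Matrix (Fin (dim i)) (Fin (dim i)) ℂ)
lemma prodState_hermitian (hρ : ∀ i, IsState (ρ i)) : (prodState ρ)ᴴ = prodState ρ := by
  obtain ⟨C, hC⟩ := prod_fact ρ hρ
  rw [hC, Matrix.conjTranspose_mul, Matrix.conjTranspose_conjTranspose]

/-- `star Tr(ϱ M N) = Tr(ϱ Nᴴ Mᴴ)`. -/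
lemma star_trace3 (hρ : ∀ i, IsState (ρ i)) (M N : Matrix (∀ j, Fin (dim j)) (∀ j, Fin (dim j)) ℂ) :
    star ((prodState ρ * M * N).trace) = (prodState ρ * Nᴴ * Mᴴ).trace := by
  rw [← Matrix.trace_conjTranspose]
  rw [Matrix.conjTranspose_mul, Matrix.conjTranspose_mul, prodState_hermitian ρ hρ]
  rw [← Matrix.mul_assoc, Matrix.trace_mul_cycle]

/-- `star Tr(ϱ M) = Tr(ϱ Mᴴ)`. -/
lemma star_trace2 (hρ : ∀ i, IsState (ρ i)) (M : Matrix (∀ j, Fin (dim j)) (∀ j, Fin (dim j)) ℂ) :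
    star ((prodState ρ * M).trace) = (prodState ρ * Mᴴ).trace := by
  rw [← Matrix.trace_conjTranspose, Matrix.conjTranspose_mul, prodState_hermitian ρ hρ,
    Matrix.trace_mul_comm]

lemma tr3 (hρ : ∀ i, IsState (ρ i)) (i : Fin n)
    (A B : Matrix (∀ j, Fin (dim j)) (∀ j, Fin (dim j)) ℂ) :
    (prodState ρ * Emap ρ i A * B).trace
      = (prodState ρ * Emap ρ i A * Emap ρ i B).trace := by
  have hH := (hρ i).1.1
  have htr := (hρ i).2
  have h1 : star ((prodState ρ * Emap ρ i A * B).trace)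
      = (prodState ρ * Bᴴ * (Emap ρ i A)ᴴ).trace := star_trace3 ρ hρ _ _
  rw [Emap_conjT ρ i hH, tr2 ρ i htr] at h1
  have h2 : star ((prodState ρ * Emap ρ i Bᴴ * Emap ρ i Aᴴ).trace)
      = (prodState ρ * (Emap ρ i Aᴴ)ᴴ * (Emap ρ i Bᴴ)ᴴ).trace := star_trace3 ρ hρ _ _
  rw [Emap_conjT ρ i hH, Emap_conjT ρ i hH, Matrix.conjTranspose_conjTranspose,
    Matrix.conjTranspose_conjTranspose] at h2
  calc (prodState ρ * Emap ρ i A * B).trace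
      = star (star ((prodState ρ * Emap ρ i A * B).trace)) := (star_star _).symm
    _ = star ((prodState ρ * Emap ρ i Bᴴ * Emap ρ i Aᴴ).trace) := by rw [h1]
    _ = (prodState ρ * Emap ρ i A * Emap ρ i B).trace := h2

/-- Positivity: `Tr(ϱ Aᴴ A)` is a nonnegative real. -/
lemma phi_nonneg (hρ : ∀ i, IsState (ρ i)) (A : Matrix (∀ j, Fin (dim j)) (∀ j, Fin (dim j)) ℂ) :
    ∃ r : ℝ, 0 ≤ r ∧ (prodState ρ * (Aᴴ * A)).trace = (r : ℂ) := by
  obtain ⟨C, hC⟩ := prod_fact ρ hρ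
  have h1 : (prodState ρ * (Aᴴ * A)).trace = ((A * Cᴴ)ᴴ * (A * Cᴴ)).trace := by
    rw [hC, Matrix.conjTranspose_mul, Matrix.conjTranspose_conjTranspose]
    rw [Matrix.mul_assoc, Matrix.trace_mul_comm]
    simp only [Matrix.mul_assoc]
  refine ⟨∑ j, ∑ k, Complex.normSq ((A * Cᴴ) k j), Finset.sum_nonneg fun _ _ => Finset.sum_nonneg fun _ _ => Complex.normSq_nonneg _, ?_⟩
  rw [h1]
  have : ∀ z : ℂ, star z * z = ((Complex.normSq z : ℝ) : ℂ) := fun z => by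
    rw [Complex.star_def, mul_comm, Complex.mul_conj]
  simp only [Matrix.trace, Matrix.diag, Matrix.mul_apply, Matrix.conjTranspose_apply, this]
  push_cast
  rfl

end Phi

end QESAux
namespace QESAux
open Matrix Finset
set_option linter.unusedSectionVars false
set_option maxHeartbeats 2000000

variable {n : ℕ} {dim : Fin n → ℕ} (ρ : ∀ i, Matrix (Fin (dim i)) (Fin (dim i)) ℂ)

lemma Emap_D_zero (i : Fin n) (htr : (ρ i).trace = 1)
    (B : Matrix (∀ j, Fin (dim j)) (∀ j, Fin (dim j)) ℂ) :
    Emap ρ i (Dmap ρ i B) = 0 := by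
  rw [Dmap, Emap_sub, Emap_idem ρ i htr, sub_self]

lemma pyth (hρ : ∀ i, IsState (ρ i)) (i : Fin n)
    (B : Matrix (∀ j, Fin (dim j)) (∀ j, Fin (dim j)) ℂ) :
    (prodState ρ * (Bᴴ * B)).trace
      = (prodState ρ * ((Emap ρ i B)ᴴ * Emap ρ i B)).trace
        + (prodState ρ * ((Dmap ρ i B)ᴴ * Dmap ρ i B)).trace := by
  have hH := (hρ i).1.1
  have htri := (hρ i).2
  have hED := Emap_D_zero ρ i htri B
  have hc1 : (prodState ρ * ((Emap ρ i B)ᴴ * Dmap ρ i B)).trace = 0 := by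
    rw [← Matrix.mul_assoc, Emap_conjT ρ i hH, tr3 ρ hρ i, hED, Matrix.mul_zero,
      Matrix.trace_zero]
  have hc2 : (prodState ρ * ((Dmap ρ i B)ᴴ * Emap ρ i B)).trace = 0 := by
    rw [← Matrix.mul_assoc, tr2 ρ i htri, ← Emap_conjT ρ i hH, hED]
    simp
  have hsplit : Bᴴ * B = (Emap ρ i B)ᴴ * Emap ρ i B + (Emap ρ i B)ᴴ * Dmap ρ i B
      + (Dmap ρ i B)ᴴ * Emap ρ i B + (Dmap ρ i B)ᴴ * Dmap ρ i B := by
    have hB : B = Emap ρ i B + Dmap ρ i B := by simp [Dmap]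
    conv_lhs => rw [hB]
    rw [Matrix.conjTranspose_add]
    noncomm_ring
  rw [hsplit]
  simp only [Matrix.mul_add, Matrix.trace_add, hc1, hc2]
  ring

/-- Iterated application of `Emap` for coordinates `0, …, k-1`. -/
def Wmap : ℕ → Matrix (∀ j, Fin (dim j)) (∀ j, Fin (dim j)) ℂ →
    Matrix (∀ j, Fin (dim j)) (∀ j, Fin (dim j)) ℂ
  | 0, B => B
  | k + 1, B => if h : k < n then Emap ρ ⟨k, h⟩ (Wmap k B) else Wmap k B

lemma Wmap_zero (B : Matrix (∀ j, Fin (dim j)) (∀ j, Fin (dim j)) ℂ) :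
    Wmap ρ 0 B = B := rfl

lemma Wmap_succ_of_lt {k : ℕ} (h : k < n)
    (B : Matrix (∀ j, Fin (dim j)) (∀ j, Fin (dim j)) ℂ) :
    Wmap ρ (k + 1) B = Emap ρ ⟨k, h⟩ (Wmap ρ k B) := by
  rw [Wmap, dif_pos h]

lemma Wmap_trace (hρ : ∀ i, IsState (ρ i)) (k : ℕ)
    (B : Matrix (∀ j, Fin (dim j)) (∀ j, Fin (dim j)) ℂ) :
    (prodState ρ * Wmap ρ k B).trace = (prodState ρ * B).trace := by
  induction k with
  | zero => rfl
  | succ k ih =>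
    by_cases h : k < n
    · rw [Wmap_succ_of_lt ρ h, tr1 ρ _ (hρ _).2, ih]
    · rw [Wmap, dif_neg h, ih]

lemma Wmap_D (hρ : ∀ i, IsState (ρ i)) (j : Fin n)
    (B : Matrix (∀ j, Fin (dim j)) (∀ j, Fin (dim j)) ℂ) :
    ∀ k, k ≤ (j : ℕ) → Wmap ρ k (Dmap ρ j B) = Dmap ρ j (Wmap ρ k B) := by
  intro k
  induction k with
  | zero => intro _; rfl
  | succ k ih =>
    intro hk
    have hkj : k < (j : ℕ) := hk
    have hkn : k < n := lt_trans hkj j.isLt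
    have hne : (⟨k, hkn⟩ : Fin n) ≠ j := by
      intro hcon
      exact absurd (congrArg Fin.val hcon) (Nat.ne_of_lt hkj)
    rw [Wmap_succ_of_lt ρ hkn, Wmap_succ_of_lt ρ hkn, ih (le_of_lt hkj)]
    rw [Dmap, Dmap, Emap_sub, Emap_comm ρ hne]

lemma Wmap_herm (hρ : ∀ i, IsState (ρ i)) (k : ℕ)
    {B : Matrix (∀ j, Fin (dim j)) (∀ j, Fin (dim j)) ℂ} (hB : Bᴴ = B) :
    (Wmap ρ k B)ᴴ = Wmap ρ k B := by
  induction k with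
  | zero => exact hB
  | succ k ih =>
    by_cases h : k < n
    · rw [Wmap_succ_of_lt ρ h, Emap_conjT ρ _ (hρ _).1.1, ih]
    · rw [Wmap, dif_neg h, ih]

end QESAux
namespace QESAux
open Matrix Finset
set_option linter.unusedSectionVars false
set_option maxHeartbeats 2000000

variable {n : ℕ} {dim : Fin n → ℕ} (ρ : ∀ i, Matrix (Fin (dim i)) (Fin (dim i)) ℂ)

lemma Wmap_scalar (hdim : ∀ i, 1 ≤ dim i)
    (X : Matrix (∀ j, Fin (dim j)) (∀ j, Fin (dim j)) ℂ) :
    ∃ γ : ℂ, Wmap ρ n X = γ • (1 : Matrix (∀ j, Fin (dim j)) (∀ j, Fin (dim j)) ℂ) := by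
  classical
  set z : ∀ j, Fin (dim j) := fun j => ⟨0, hdim j⟩ with hz
  set π : ℕ → (∀ j, Fin (dim j)) → (∀ j, Fin (dim j)) :=
    fun k a j => if (j : ℕ) < k then z j else a j with hπ
  have hπ_update : ∀ (k : ℕ) (a : ∀ j, Fin (dim j)) (i : Fin n), k ≤ (i : ℕ) →
      ∀ c, π k (Function.update a i c) = Function.update (π k a) i c := by
    intro k a i hk c
    funext j
    rcases eq_or_ne j i with rfl | hj
    · simp [hπ, Function.update_self, Nat.not_lt.mpr hk]
    · simp only [hπ, Function.update_of_ne hj]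
  have hπ_succ : ∀ (k : ℕ) (a : ∀ j, Fin (dim j)) (i : Fin n), (i : ℕ) = k →
      ∀ c, Function.update (π (k + 1) a) i c = Function.update (π k a) i c := by
    intro k a i hik c
    funext j
    rcases eq_or_ne j i with rfl | hj
    · simp [Function.update_self]
    · have hjk : (j : ℕ) ≠ k := fun hcon => hj (Fin.ext (hcon.trans hik.symm))
      simp only [Function.update_of_ne hj, hπ]
      rcases Nat.lt_or_ge (j : ℕ) k with h | h
      · rw [if_pos h, if_pos (Nat.lt_succ_of_lt h)]
      · rw [if_neg (Nat.not_lt.mpr h), if_neg (Nat.not_lt.mpr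
          (Nat.succ_le_of_lt (Nat.lt_of_le_of_ne h (Ne.symm hjk))))]
  have main : ∀ k, k ≤ n → ∀ a b, Wmap ρ k X a b =
      if (∀ j : Fin n, (j : ℕ) < k → a j = b j)
        then Wmap ρ k X (π k a) (π k b) else 0 := by
    intro k
    induction k with
    | zero =>
      intro _ a b
      rw [if_pos (fun j hj => absurd hj (Nat.not_lt_zero _))]
      have hπ0 : ∀ a : ∀ j, Fin (dim j), π 0 a = a := by
        intro a; funext j; simp [hπ]
      rw [hπ0, hπ0]
    | succ k ih =>
      intro hk a b
      have hkn : k < n := hk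
      set i : Fin n := ⟨k, hkn⟩ with hi
      have hik : (i : ℕ) = k := rfl
      rw [Wmap_succ_of_lt ρ hkn]
      show (if a i = b i then
          ∑ e, ∑ c, ρ i e c * Wmap ρ k X (Function.update a i c) (Function.update b i e)
        else 0) = _
      -- rewrite the inner matrix entries using the inductive hypothesis
      have hinner : ∀ (e c : Fin (dim i)),
          Wmap ρ k X (Function.update a i c) (Function.update b i e)
            = if (∀ j : Fin n, (j : ℕ) < k → a j = b j)
                then Wmap ρ k X (Function.update (π k a) i c) (Function.update (π k b) i e)
                else 0 := by
        intro e c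
        rw [ih (Nat.le_of_succ_le hk)]
        have hcond : (∀ j : Fin n, (j : ℕ) < k →
            Function.update a i c j = Function.update b i e j)
            ↔ (∀ j : Fin n, (j : ℕ) < k → a j = b j) := by
          constructor
          · intro h j hj
            have hji : j ≠ i := fun hcon => absurd (hcon ▸ hj) (by simp [hik])
            have := h j hj
            rwa [Function.update_of_ne hji, Function.update_of_ne hji] at this
          · intro h j hj
            have hji : j ≠ i := fun hcon => absurd (hcon ▸ hj) (by simp [hik])
            rw [Function.update_of_ne hji, Function.update_of_ne hji]
            exact h j hj
        rw [hπ_update k a i (le_of_eq hik.symm) c, hπ_update k b i (le_of_eq hik.symm) e]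
        by_cases hA : ∀ j : Fin n, (j : ℕ) < k → a j = b j
        · rw [if_pos (hcond.mpr hA), if_pos hA]
        · rw [if_neg (fun h => hA (hcond.mp h)), if_neg hA]
      -- compute the right-hand side
      have hrhs : Emap ρ ⟨k, hkn⟩ (Wmap ρ k X) (π (k+1) a) (π (k+1) b)
          = ∑ e, ∑ c, ρ i e c *
              Wmap ρ k X (Function.update (π k a) i c) (Function.update (π k b) i e) := by
        show (if π (k+1) a i = π (k+1) b i then _ else 0) = _
        have hzz : π (k+1) a i = π (k+1) b i := by
          simp [hπ, hik, Nat.lt_succ_self]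
        rw [if_pos hzz]
        refine Finset.sum_congr rfl fun e _ => Finset.sum_congr rfl fun c _ => ?_
        rw [hπ_succ k a i hik c, hπ_succ k b i hik e]
      -- condition equivalence
      have hC : (∀ j : Fin n, (j : ℕ) < k + 1 → a j = b j)
          ↔ ((∀ j : Fin n, (j : ℕ) < k → a j = b j) ∧ a i = b i) := by
        constructor
        · intro h
          exact ⟨fun j hj => h j (Nat.lt_succ_of_lt hj), h i (by simp [hik])⟩
        · rintro ⟨hA, hii⟩ j hj
          rcases Nat.lt_succ_iff_lt_or_eq.mp hj with h | h
          · exact hA j h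
          · have : j = i := Fin.ext (h.trans hik.symm)
            rw [this]; exact hii
      rw [hrhs]
      by_cases h1 : a i = b i <;> by_cases h2 : ∀ j : Fin n, (j : ℕ) < k → a j = b j
      · rw [if_pos h1, if_pos (hC.mpr ⟨h2, h1⟩)]
        refine Finset.sum_congr rfl fun e _ => Finset.sum_congr rfl fun c _ => ?_
        rw [hinner e c, if_pos h2]
      · rw [if_pos h1, if_neg (fun h => h2 (hC.mp h).1)]
        simp only [hinner, if_neg h2, mul_zero, Finset.sum_const_zero]
      · rw [if_neg h1, if_neg (fun h => h1 (hC.mp h).2)]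
      · rw [if_neg h1, if_neg (fun h => h1 (hC.mp h).2)]
  -- conclude
  refine ⟨Wmap ρ n X z z, ?_⟩
  ext a b
  have hπn : ∀ a : ∀ j, Fin (dim j), π n a = z := by
    intro a; funext j; simp [hπ, j.isLt]
  rw [main n le_rfl a b, hπn, hπn]
  have hab : (∀ j : Fin n, (j : ℕ) < n → a j = b j) ↔ a = b := by
    constructor
    · intro h; funext j; exact h j j.isLt
    · rintro rfl j _; rfl
  by_cases h : a = b
  · rw [if_pos (hab.mpr h), h, Matrix.smul_apply, Matrix.one_apply_eq, smul_eq_mul, mul_one]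
  · rw [if_neg (fun hh => h (hab.mp hh)), Matrix.smul_apply,
      Matrix.one_apply_ne h, smul_eq_mul, mul_zero]

end QESAux
open Matrix Finset QESAux in
set_option maxHeartbeats 2000000 in
/-- Quantum Efron–Stein inequality. -/
theorem quantum_efron_stein (n : ℕ) (hn : 1 ≤ n) (dim : Fin n → ℕ)
    (hdim : ∀ i, 1 ≤ dim i)
    (ρ : ∀ i, Matrix (Fin (dim i)) (Fin (dim i)) ℂ)
    (hρ : ∀ i, IsState (ρ i))
    (X : Matrix (∀ j, Fin (dim j)) (∀ j, Fin (dim j)) ℂ) (hX : X.IsHermitian) :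
    qVar (prodState ρ) X ≤
      ∑ i, ((prodState ρ * (Dmap ρ i X * Dmap ρ i X)).trace).re := by
  classical
  have hherm : ∀ i, (ρ i).IsHermitian := fun i => (hρ i).1.1
  have htr : ∀ i, (ρ i).trace = 1 := fun i => (hρ i).2
  have hXh : Xᴴ = X := hX
  -- the quadratic form
  choose Rv hRv0 hRvEq using phi_nonneg ρ hρ
  have hre : ∀ A, ((prodState ρ * (Aᴴ * A)).trace).re = Rv A := fun A => by
    rw [hRvEq]; simp
  -- Pythagoras, real version
  have pythR : ∀ (i : Fin n) B, Rv B = Rv (Emap ρ i B) + Rv (Dmap ρ i B) := by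
    intro i B
    have h := pyth ρ hρ i B
    rw [hRvEq B, hRvEq (Emap ρ i B), hRvEq (Dmap ρ i B)] at h
    exact_mod_cast h
  have contractR : ∀ (i : Fin n) B, Rv (Emap ρ i B) ≤ Rv B := fun i B => by
    rw [pythR i B]; linarith [hRv0 (Dmap ρ i B)]
  have Wcontract : ∀ k B, Rv (Wmap ρ k B) ≤ Rv B := by
    intro k
    induction k with
    | zero => intro B; exact le_of_eq (congrArg Rv (Wmap_zero ρ B))
    | succ k ih =>
      intro B
      by_cases h : k < n
      · rw [Wmap_succ_of_lt ρ h]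
        exact le_trans (contractR _ _) (ih B)
      · rw [Wmap, dif_neg h]
        exact ih B
  -- telescoping
  set g : ℕ → ℝ := fun j =>
    if h : j < n then Rv (Dmap ρ ⟨j, h⟩ (Wmap ρ j X)) else 0 with hg
  have tele : ∀ k, k ≤ n → Rv X = Rv (Wmap ρ k X) + ∑ j ∈ Finset.range k, g j := by
    intro k
    induction k with
    | zero => intro _; simp [Wmap_zero]
    | succ k ih =>
      intro hk
      have hkn : k < n := hk
      rw [Finset.sum_range_succ, Wmap_succ_of_lt ρ hkn,
        ih (Nat.le_of_succ_le hk)]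
      have hp := pythR ⟨k, hkn⟩ (Wmap ρ k X)
      have hgk : g k = Rv (Dmap ρ ⟨k, hkn⟩ (Wmap ρ k X)) := by
        rw [hg]; exact dif_pos hkn
      rw [hgk]
      linarith
  -- the mean is real
  set c : ℂ := (prodState ρ * X).trace with hc
  set t : ℝ := c.re with ht
  have hcreal : c = (t : ℂ) := by
    have h1 : star c = c := by rw [hc, star_trace2 ρ hρ X, hXh]
    exact (Complex.conj_eq_iff_re.mp h1).symm
  -- variance of the fully averaged element dominates t^2
  set Z : Matrix (∀ j, Fin (dim j)) (∀ j, Fin (dim j)) ℂ := Wmap ρ n X with hZ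
  have hcW : (prodState ρ * Z).trace = c := Wmap_trace ρ hρ n X
  obtain ⟨γ, hγ⟩ := Wmap_scalar ρ hdim X
  have hγc : γ = c := by
    rw [← hcW, hZ, hγ, Matrix.mul_smul, Matrix.trace_smul, Matrix.mul_one,
      prod_trace ρ hρ, smul_eq_mul, mul_one]
  have hZform : Z = (t : ℂ) • 1 := by rw [hZ, hγ, hγc, hcreal]
  have hmean : Rv Z = t ^ 2 := by
    have h1 : (prodState ρ * (Zᴴ * Z)).trace = ((t ^ 2 : ℝ) : ℂ) := by
      rw [hZform, Matrix.conjTranspose_smul, Matrix.conjTranspose_one]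
      simp only [Matrix.smul_mul, Matrix.mul_smul, Matrix.one_mul, smul_smul,
        Matrix.trace_smul, Matrix.mul_one, prod_trace ρ hρ, smul_eq_mul, mul_one]
      rw [Complex.star_def, Complex.conj_ofReal]
      push_cast
      ring
    have h2 := hRvEq Z
    rw [h1] at h2
    exact_mod_cast h2.symm
  -- each martingale increment is dominated
  have hgle : ∀ (i : Fin n), g (i : ℕ) ≤ Rv (Dmap ρ i X) := by
    intro i
    have hi : (i : ℕ) < n := i.isLt
    have h1 : g (i : ℕ) = Rv (Dmap ρ i (Wmap ρ (i : ℕ) X)) := by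
      rw [hg]
      show (dite ((i : ℕ) < n)
          (fun h => Rv (Dmap ρ ⟨(i : ℕ), h⟩ (Wmap ρ (i : ℕ) X))) (fun _ => 0)) = _
      rw [dif_pos hi, Fin.eta]
    rw [h1, ← Wmap_D ρ hρ i X (i : ℕ) le_rfl]
    exact Wcontract _ _
  -- sum over range n equals sum over Fin n
  have hsum : ∑ j ∈ Finset.range n, g j ≤ ∑ i : Fin n, Rv (Dmap ρ i X) := by
    rw [← Fin.sum_univ_eq_sum_range g n]
    exact Finset.sum_le_sum fun i _ => hgle i
  -- rewrite the RHS of the goal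
  have hDh : ∀ i : Fin n, (Dmap ρ i X)ᴴ = Dmap ρ i X := by
    intro i
    rw [Dmap, Matrix.conjTranspose_sub, hXh, Emap_conjT ρ i (hherm i), hXh]
  have hRHS : ∀ i : Fin n,
      ((prodState ρ * (Dmap ρ i X * Dmap ρ i X)).trace).re = Rv (Dmap ρ i X) := by
    intro i
    rw [← hre (Dmap ρ i X), hDh i]
  -- put everything together
  have hvar : qVar (prodState ρ) X = Rv X - t ^ 2 := by
    rw [qVar, ← hc, ← ht, ← hre X, hXh]
  have htel := tele n le_rfl
  calc qVar (prodState ρ) X = Rv X - t ^ 2 := hvar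
    _ = ∑ j ∈ Finset.range n, g j := by rw [htel, hmean]; ring
    _ ≤ ∑ i : Fin n, Rv (Dmap ρ i X) := hsum
    _ = ∑ i, ((prodState ρ * (Dmap ρ i X * Dmap ρ i X)).trace).re :=
        (Finset.sum_congr rfl fun i _ => (hRHS i)).symm
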